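/- For x ∈ ℝ¹⁴, with the quaternion hermitian matrix A(x) built from X¹ = x¹ + x⁶i + x⁹j + x¹⁰k, X² = x² + x⁷i + x¹¹j + x¹²k, X³ = x³ + x⁸i + x¹³j + x¹⁴k as A(x) = [[x⁵ − √3·x⁴, √3·X³, √3·X²], [√3·conj(X³), x⁵ + √3·x⁴, √3·X¹], [√3·conj(X²), √3·conj(X¹), −2x⁵]], let Υ¹(x) = (1/2)det₁A(x) and Υ²(x) = (1/2)det₂A(x). Let σ: ℝ¹⁴ → ℝ¹⁴ be the linear map diag(1,1,1,1,1,−1,−1,…,−1) which fixes x¹,…,x⁵ and negates x⁶,…,x¹⁴. Then Υ²(x) = Υ¹(σ(x)) for all x ∈ ℝ¹⁴; i.e. the cubic forms Υ¹ and Υ² are related by the orthogonal transformation σ ∈ O(14) of determinant −1. -/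

import Mathlib

open scoped Quaternion
set_option maxHeartbeats 1000000

/-- The first real-valued Weierstrass determinant of a 3×3 hermitian quaternion matrix. -/
noncomputable def det1 (a : Fin 3 → Fin 3 → ℍ[ℝ]) : ℍ[ℝ] :=
  a 0 0 * a 1 1 * a 2 2 - a 0 1 * a 1 0 * a 2 2 - a 0 2 * a 1 1 * a 2 0
    - a 0 0 * a 1 2 * a 2 1 + a 0 2 * (a 2 1 * a 1 0) + (a 0 1 * a 1 2) * a 2 0

/-- The second real-valued Weierstrass determinant of a 3×3 hermitian quaternion matrix. -/
noncomputable def det2 (a : Fin 3 → Fin 3 → ℍ[ℝ]) : ℍ[ℝ] :=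
  a 0 0 * a 1 1 * a 2 2 - a 0 1 * a 1 0 * a 2 2 - a 0 2 * a 1 1 * a 2 0
    - a 0 0 * a 1 2 * a 2 1 + a 2 0 * (a 1 2 * a 0 1) + (a 1 0 * a 2 1) * a 0 2

/-- The quaternion `X¹ = x¹ + x⁶ i + x⁹ j + x¹⁰ k`. -/
def Xq1 (x : Fin 14 → ℝ) : ℍ[ℝ] := ⟨x 0, x 5, x 8, x 9⟩

/-- The quaternion `X² = x² + x⁷ i + x¹¹ j + x¹² k`. -/
def Xq2 (x : Fin 14 → ℝ) : ℍ[ℝ] := ⟨x 1, x 6, x 10, x 11⟩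

/-- The quaternion `X³ = x³ + x⁸ i + x¹³ j + x¹⁴ k`. -/
def Xq3 (x : Fin 14 → ℝ) : ℍ[ℝ] := ⟨x 2, x 7, x 12, x 13⟩

/-- The generic quaternion hermitian trace-free 3×3 matrix parametrized by `x ∈ ℝ¹⁴`. -/
noncomputable def A14 (x : Fin 14 → ℝ) : Fin 3 → Fin 3 → ℍ[ℝ] :=
  ![![((x 4 - Real.sqrt 3 * x 3 : ℝ) : ℍ[ℝ]),
     ((Real.sqrt 3 : ℝ) : ℍ[ℝ]) * Xq3 x,
     ((Real.sqrt 3 : ℝ) : ℍ[ℝ]) * Xq2 x],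
   ![((Real.sqrt 3 : ℝ) : ℍ[ℝ]) * star (Xq3 x),
     ((x 4 + Real.sqrt 3 * x 3 : ℝ) : ℍ[ℝ]),
     ((Real.sqrt 3 : ℝ) : ℍ[ℝ]) * Xq1 x],
   ![((Real.sqrt 3 : ℝ) : ℍ[ℝ]) * star (Xq2 x),
     ((Real.sqrt 3 : ℝ) : ℍ[ℝ]) * star (Xq1 x),
     ((-2 * x 4 : ℝ) : ℍ[ℝ])]]

/-- The cubic form `Υ¹(x) = ½ det₁ A(x)` on `ℝ¹⁴`. -/
noncomputable def Ups1 (x : Fin 14 → ℝ) : ℍ[ℝ] := ((1 / 2 : ℝ) : ℍ[ℝ]) * det1 (A14 x)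

/-- The cubic form `Υ²(x) = ½ det₂ A(x)` on `ℝ¹⁴`. -/
noncomputable def Ups2 (x : Fin 14 → ℝ) : ℍ[ℝ] := ((1 / 2 : ℝ) : ℍ[ℝ]) * det2 (A14 x)

/-- The orthogonal map `σ = diag(1,1,1,1,1,−1,…,−1) ∈ O(14)`, fixing `x¹,…,x⁵` and
negating `x⁶,…,x¹⁴`. -/
def sigma14 (x : Fin 14 → ℝ) : Fin 14 → ℝ := fun i => if (i : ℕ) < 5 then x i else -x i

def qmk (a b c d : ℝ) : ℍ[ℝ] := ⟨a, b, c, d⟩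
theorem qmk_re (a b c d : ℝ) : (qmk a b c d).re = a := rfl
theorem qmk_imI (a b c d : ℝ) : (qmk a b c d).imI = b := rfl
theorem qmk_imJ (a b c d : ℝ) : (qmk a b c d).imJ = c := rfl
theorem qmk_imK (a b c d : ℝ) : (qmk a b c d).imK = d := rfl
theorem Xq1_eq (x : Fin 14 → ℝ) : Xq1 x = qmk (x 0) (x 5) (x 8) (x 9) := rfl
theorem Xq2_eq (x : Fin 14 → ℝ) : Xq2 x = qmk (x 1) (x 6) (x 10) (x 11) := rfl
theorem Xq3_eq (x : Fin 14 → ℝ) : Xq3 x = qmk (x 2) (x 7) (x 12) (x 13) := rfl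

/-- The cubic forms `Υ¹` and `Υ²` are related by the orthogonal transformation `σ`:
`Υ²(x) = Υ¹(σ(x))` for all `x ∈ ℝ¹⁴`. -/

theorem statement5 : ∀ x : Fin 14 → ℝ, Ups2 x = Ups1 (sigma14 x) := by
  intro x
  simp only [Ups1, Ups2, det1, det2, A14, sigma14, Xq1_eq, Xq2_eq, Xq3_eq, Matrix.cons_val_zero,
    Matrix.cons_val_one, Matrix.head_cons, Matrix.cons_val_two, Matrix.tail_cons,
    show ((3:Fin 14):ℕ) = 3 from rfl, show ((4:Fin 14):ℕ) = 4 from rfl, show ((5:Fin 14):ℕ) = 5 from rfl, show ((6:Fin 14):ℕ) = 6 from rfl, show ((7:Fin 14):ℕ) = 7 from rfl, show ((8:Fin 14):ℕ) = 8 from rfl, show ((9:Fin 14):ℕ) = 9 from rfl, show ((10:Fin 14):ℕ) = 10 from rfl, show ((11:Fin 14):ℕ) = 11 from rfl, show ((12:Fin 14):ℕ) = 12 from rfl, show ((13:Fin 14):ℕ) = 13 from rfl]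
  norm_num
  left
  rw [Quaternion.ext_iff]
  refine ⟨?_, ?_, ?_, ?_⟩ <;>
    simp only [Quaternion.re_add, Quaternion.imI_add, Quaternion.imJ_add,
      Quaternion.imK_add, Quaternion.re_sub, Quaternion.imI_sub,
      Quaternion.imJ_sub, Quaternion.imK_sub, Quaternion.re_neg,
      Quaternion.imI_neg, Quaternion.imJ_neg, Quaternion.imK_neg,
      Quaternion.re_mul, Quaternion.imI_mul, Quaternion.imJ_mul,
      Quaternion.imK_mul, Quaternion.re_coe, Quaternion.imI_coe,
      Quaternion.imJ_coe, Quaternion.imK_coe, Quaternion.re_star,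
      Quaternion.imI_star, Quaternion.imJ_star, Quaternion.imK_star, qmk_re, qmk_imI, qmk_imJ, qmk_imK] <;>
    ring
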